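/- Let ∇ ⊂ ℝ⁴ be defined by x,y,z,w ≥ 0, x+y+z-w ≥ 0, 1-x-y-z ≥ 0. For every positive integer n, the number of lattice points in n∇ equals C(n+4,4) + 2·C(n+3,4) = (3n⁴ + 22n³ + 57n² + 62n + 24)/24. -/

import Mathlib

open Pointwise

def nabla : Set (ℝ × ℝ × ℝ × ℝ) :=
  {p : ℝ × ℝ × ℝ × ℝ |
    0 ≤ p.1 ∧
    0 ≤ p.2.1 ∧
    0 ≤ p.2.2.1 ∧
    0 ≤ p.2.2.2 ∧
    0 ≤ p.1 + p.2.1 + p.2.2.1 - p.2.2.2 ∧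
    0 ≤ 1 - p.1 - p.2.1 - p.2.2.1}

lemma mem_smul_nabla (n : ℕ) (hn : 0 < n) (p : ℝ × ℝ × ℝ × ℝ) :
    p ∈ (n:ℝ) • nabla ↔
      0 ≤ p.1 ∧ 0 ≤ p.2.1 ∧ 0 ≤ p.2.2.1 ∧ 0 ≤ p.2.2.2 ∧
      p.2.2.2 ≤ p.1 + p.2.1 + p.2.2.1 ∧ p.1 + p.2.1 + p.2.2.1 ≤ (n:ℝ) := by
  have h0 : (0:ℝ) < n := by exact_mod_cast hn
  constructor
  · rintro ⟨q, hq, rfl⟩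
    obtain ⟨h1, h2, h3, h4, h5, h6⟩ := hq
    simp only [Prod.smul_fst, Prod.smul_snd, smul_eq_mul]
    refine ⟨by positivity, by positivity, by positivity, by positivity, by nlinarith, by nlinarith⟩
  · rintro ⟨h1, h2, h3, h4, h5, h6⟩
    refine ⟨(p.1 / n, p.2.1 / n, p.2.2.1 / n, p.2.2.2 / n), ?_, ?_⟩
    · refine ⟨by positivity, by positivity, by positivity, by positivity, ?_, ?_⟩
      · show (0:ℝ) ≤ p.1 / n + p.2.1 / n + p.2.2.1 / n - p.2.2.2 / n
        have he : p.1 / (n:ℝ) + p.2.1 / n + p.2.2.1 / n - p.2.2.2 / n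
            = (p.1 + p.2.1 + p.2.2.1 - p.2.2.2) / n := by ring
        rw [he]
        apply div_nonneg (by linarith) h0.le
      · show (0:ℝ) ≤ 1 - p.1 / n - p.2.1 / n - p.2.2.1 / n
        have he : (1:ℝ) - p.1 / n - p.2.1 / n - p.2.2.1 / n
            = ((n:ℝ) - (p.1 + p.2.1 + p.2.2.1)) / n := by field_simp; ring
        rw [he]
        apply div_nonneg (by linarith) h0.le
    · show (n:ℝ) • ((p.1 / n : ℝ), (p.2.1 / n : ℝ), (p.2.2.1 / n : ℝ), (p.2.2.2 / n : ℝ)) = p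
      obtain ⟨a, b, c, d⟩ := p
      simp only [Prod.smul_mk, smul_eq_mul, Prod.mk.injEq]
      refine ⟨?_, ?_, ?_, ?_⟩ <;> field_simp

section aux
open Finset

noncomputable def F (n : ℕ) : Finset (ℤ × ℤ × ℤ × ℤ) :=
  ((Finset.Icc (0:ℤ) n) ×ˢ (Finset.Icc (0:ℤ) n) ×ˢ (Finset.Icc (0:ℤ) n) ×ˢ (Finset.Icc (0:ℤ) n)).filter
    (fun v => v.2.2.2 ≤ v.1 + v.2.1 + v.2.2.1 ∧ v.1 + v.2.1 + v.2.2.1 ≤ (n:ℤ))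

lemma mem_F (n : ℕ) (v : ℤ × ℤ × ℤ × ℤ) : v ∈ F n ↔
    0 ≤ v.1 ∧ 0 ≤ v.2.1 ∧ 0 ≤ v.2.2.1 ∧ 0 ≤ v.2.2.2 ∧
    v.2.2.2 ≤ v.1 + v.2.1 + v.2.2.1 ∧ v.1 + v.2.1 + v.2.2.1 ≤ (n:ℤ) := by
  simp only [F, Finset.mem_filter, Finset.mem_product, Finset.mem_Icc]
  omega

noncomputable def Q (m : ℕ) : Finset (ℤ × ℤ) :=
  ((Finset.Icc (0:ℤ) m) ×ˢ (Finset.Icc (0:ℤ) m)).filter (fun p => p.1 + p.2 ≤ (m:ℤ))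

lemma mem_Q (m : ℕ) (p : ℤ × ℤ) : p ∈ Q m ↔ 0 ≤ p.1 ∧ 0 ≤ p.2 ∧ p.1 + p.2 ≤ (m:ℤ) := by
  simp only [Q, Finset.mem_filter, Finset.mem_product, Finset.mem_Icc]
  omega

lemma card_Q (m : ℕ) : (Q m).card = (m+2).choose 2 := by
  induction m with
  | zero =>
    have : Q 0 = {((0:ℤ),(0:ℤ))} := by
      ext p; simp [mem_Q, Prod.ext_iff]; omega
    simp [this]
  | succ m ih =>
    have hinj : Function.Injective (fun x : ℤ => (x, (m:ℤ)+1-x)) := by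
      intro a b h; simpa using (Prod.ext_iff.mp h).1
    have hdecomp : Q (m+1) = Q m ∪ (Finset.Icc (0:ℤ) (m+1)).image (fun x => (x, (m:ℤ)+1-x)) := by
      ext p
      simp only [mem_Q, Finset.mem_union, Finset.mem_image, Finset.mem_Icc, Prod.ext_iff]
      push_cast
      constructor
      · rintro ⟨h1, h2, h3⟩
        by_cases h : p.1 + p.2 ≤ (m:ℤ)
        · exact Or.inl ⟨h1, h2, h⟩
        · exact Or.inr ⟨⟨h1, by omega⟩, by omega⟩
      · rintro (⟨h1,h2,h3⟩ | ⟨⟨hx1,hx2⟩, he2⟩)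
        · exact ⟨h1, h2, by omega⟩
        · omega
    have hdisj : Disjoint (Q m) ((Finset.Icc (0:ℤ) (m+1)).image (fun x => (x, (m:ℤ)+1-x))) := by
      rw [Finset.disjoint_left]
      rintro p hp hp2
      rw [mem_Q] at hp
      simp only [Finset.mem_image, Finset.mem_Icc, Prod.ext_iff] at hp2
      obtain ⟨x, hx, he1, he2⟩ := hp2
      omega
    rw [hdecomp, Finset.card_union_of_disjoint hdisj, ih,
      Finset.card_image_of_injective _ hinj]
    rw [Int.card_Icc]
    have : ((m:ℤ)+1+1-0).toNat = m + 2 := by omega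
    rw [this]
    simp [Nat.choose_succ_succ (m+2) 1, Nat.choose_one_right]
    omega

noncomputable def G (n : ℕ) : Finset (ℤ × ℤ × ℤ × ℤ) :=
  (F (n+1)).filter (fun v => v.1 + v.2.1 + v.2.2.1 = (n:ℤ)+1)

lemma card_G (n : ℕ) : (G n).card = (n+3).choose 2 * (n+2) := by
  have : (G n).card = (Q (n+1) ×ˢ Finset.Icc (0:ℤ) (n+1)).card := by
    apply Finset.card_nbij' (fun v => ((v.1, v.2.1), v.2.2.2))
      (fun p => (p.1.1, p.1.2, (n:ℤ)+1 - p.1.1 - p.1.2, p.2))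
    · intro v hv
      simp only [Finset.mem_coe, G, Finset.mem_filter, mem_F] at hv
      simp only [Finset.mem_coe, Finset.mem_product, mem_Q, Finset.mem_Icc]
      push_cast at hv ⊢
      omega
    · intro p hp
      simp only [Finset.mem_coe, Finset.mem_product, mem_Q, Finset.mem_Icc] at hp
      simp only [Finset.mem_coe, G, Finset.mem_filter, mem_F]
      push_cast at hp ⊢
      omega
    · intro v hv
      simp only [Finset.mem_coe, G, Finset.mem_filter, mem_F] at hv
      push_cast at hv
      obtain ⟨a, b, c, d⟩ := v
      simp only [Prod.mk.injEq]
      push_cast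
      refine ⟨trivial, trivial, ?_, trivial⟩
      simp only [Prod.mk.injEq] at hv
      omega
    · intro p hp
      simp
  rw [this, Finset.card_product, card_Q, Int.card_Icc]
  congr 1

lemma c2 (m : ℕ) : 2 * ((m+2).choose 2) = (m+2)*(m+1) := by
  induction m with
  | zero => rfl
  | succ m ih =>
    rw [show m+1+2 = (m+2)+1 from rfl, Nat.choose_succ_succ (m+2) 1,
      Nat.choose_one_right, Nat.mul_add, ih]
    ring

lemma c3 (m : ℕ) : 6 * ((m+3).choose 3) = (m+3)*(m+2)*(m+1) := by
  induction m with
  | zero => rfl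
  | succ m ih =>
    rw [show m+1+3 = (m+3)+1 from rfl, Nat.choose_succ_succ (m+3) 2,
      Nat.mul_add, ih]
    have := c2 (m+1)
    nlinarith [this]

lemma c4 (m : ℕ) : 24 * ((m+3).choose 4) = (m+3)*(m+2)*(m+1)*m := by
  induction m with
  | zero => rfl
  | succ m ih =>
    rw [show m+1+3 = (m+3)+1 from rfl, Nat.choose_succ_succ (m+3) 3,
      Nat.mul_add, ih]
    have := c3 m
    nlinarith [this]

lemma card_F (n : ℕ) : (F n).card = (n+4).choose 4 + 2 * (n+3).choose 4 := by
  induction n with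
  | zero =>
    have : F 0 = {((0:ℤ),(0:ℤ),(0:ℤ),(0:ℤ))} := by
      ext v; simp [mem_F, Prod.ext_iff]; omega
    simp [this]
  | succ n ih =>
    have hdecomp : F (n+1) = F n ∪ G n := by
      ext v
      simp only [Finset.mem_union, mem_F, G, Finset.mem_filter]
      push_cast
      omega
    have hdisj : Disjoint (F n) (G n) := by
      rw [Finset.disjoint_left]
      intro v hv hv2
      rw [mem_F] at hv
      simp only [G, Finset.mem_filter, mem_F] at hv2
      push_cast at hv2
      omega
    rw [hdecomp, Finset.card_union_of_disjoint hdisj, ih, card_G]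
    -- (n+5).choose 4 + 2*(n+4).choose 4 = (n+4).choose 4 + 2*(n+3).choose 4 + (n+3).choose 2 * (n+2)
    have h1 := c4 (n+2)
    have h2 := c4 (n+1)
    have h3 := c4 n
    have h4 := c2 (n+1)
    nlinarith [h1, h2, h3, h4]

end aux

theorem stmt10 (n : ℕ) (hn : 0 < n) :
    {v : ℤ × ℤ × ℤ × ℤ | (((v.1 : ℝ), (v.2.1 : ℝ), (v.2.2.1 : ℝ), (v.2.2.2 : ℝ)) : ℝ × ℝ × ℝ × ℝ) ∈ (n : ℝ) • nabla}.ncard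
        = Nat.choose (n + 4) 4 + 2 * Nat.choose (n + 3) 4 ∧
      ((Nat.choose (n + 4) 4 + 2 * Nat.choose (n + 3) 4 : ℚ))
        = (3 * (n : ℚ) ^ 4 + 22 * (n : ℚ) ^ 3 + 57 * (n : ℚ) ^ 2 + 62 * (n : ℚ) ^ 1 + 24) / 24 := by
  constructor
  · have hset : {v : ℤ × ℤ × ℤ × ℤ | (((v.1 : ℝ), (v.2.1 : ℝ), (v.2.2.1 : ℝ), (v.2.2.2 : ℝ)) : ℝ × ℝ × ℝ × ℝ) ∈ (n : ℝ) • nabla} = ↑(F n) := by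
      ext v
      simp only [Set.mem_setOf_eq, Finset.mem_coe, mem_F, mem_smul_nabla n hn]
      constructor
      · rintro ⟨h1, h2, h3, h4, h5, h6⟩
        exact ⟨by exact_mod_cast h1, by exact_mod_cast h2, by exact_mod_cast h3,
          by exact_mod_cast h4, by exact_mod_cast h5, by exact_mod_cast h6⟩
      · rintro ⟨h1, h2, h3, h4, h5, h6⟩
        exact ⟨by exact_mod_cast h1, by exact_mod_cast h2, by exact_mod_cast h3,
          by exact_mod_cast h4, by exact_mod_cast h5, by exact_mod_cast h6⟩
    rw [hset, Set.ncard_coe_finset, card_F]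
  · have h1 := c4 (n+1)
    have h2 := c4 n
    have hq1 : (24:ℚ) * (((n+4).choose 4 : ℕ) : ℚ)
        = ((n:ℚ)+4)*((n:ℚ)+3)*((n:ℚ)+2)*((n:ℚ)+1) := by
      have := congrArg (Nat.cast : ℕ → ℚ) h1
      push_cast at this
      push_cast
      linarith [this]
    have hq2 : (24:ℚ) * (((n+3).choose 4 : ℕ) : ℚ)
        = ((n:ℚ)+3)*((n:ℚ)+2)*((n:ℚ)+1)*(n:ℚ) := by
      have := congrArg (Nat.cast : ℕ → ℚ) h2
      push_cast at this
      push_cast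
      linarith [this]
    rw [eq_div_iff (by norm_num : (24:ℚ) ≠ 0)]
    push_cast
    linear_combination hq1 + 2 * hq2
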